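/- On a probability space, let s_1,…,s_N, u_1,…,u_N, ε_1,…,ε_N be real random variables such that (s_1,…,s_N,u_1,…,u_N) is independent of (ε_1,…,ε_N), E(ε_i) = 0 for all i, D := (1/N)·Σ_i s_i² > 0 almost surely, and all the random ratios below are integrable. Define y_i = β·(s_i + u_i) + ε_i, β̂_OLS = ((1/N)·Σ_i s_i y_i)/D, η_N = ((1/N)·Σ_i s_i u_i)/D, and η = E(η_N). If η ≠ −1, then the rescaled estimator β̂ := β̂_OLS/(1 + η) is unbiased: E(β̂) = β. -/

import Mathlib

open MeasureTheory ProbabilityTheory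

/-- Under independence of `(s, u)` from the centered shocks `ε` and
integrability of the relevant random ratios, the rescaled estimator
`β̂ = β̂_OLS / (1 + η)` with `η = E(η_N)` is an unbiased estimator of `β`. -/
theorem rescaled_estimator_unbiased
    {Ω : Type*} [MeasurableSpace Ω] (μ : Measure Ω) [IsProbabilityMeasure μ]
    (N : ℕ) (hN : 1 ≤ N)
    (s u ε : Fin N → Ω → ℝ) (β : ℝ)
    (hindep : IndepFun (fun ω => ((fun i => s i ω, fun i => u i ω) :
        (Fin N → ℝ) × (Fin N → ℝ))) (fun ω => (fun i => ε i ω : Fin N → ℝ)) μ)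
    (hε_int : ∀ i, Integrable (ε i) μ)
    (hε_mean : ∀ i, ∫ ω, ε i ω ∂μ = 0)
    (D : Ω → ℝ)
    (hD : ∀ ω, D ω = (1 / (N : ℝ)) * ∑ i, (s i ω) ^ 2)
    (hDpos : ∀ᵐ ω ∂μ, 0 < D ω)
    (y : Fin N → Ω → ℝ)
    (hy : ∀ i ω, y i ω = β * (s i ω + u i ω) + ε i ω)
    (βhatOLS ηN : Ω → ℝ)
    (hβhatOLS : ∀ ω, βhatOLS ω = ((1 / (N : ℝ)) * ∑ i, s i ω * y i ω) / D ω)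
    (hηN : ∀ ω, ηN ω = ((1 / (N : ℝ)) * ∑ i, s i ω * u i ω) / D ω)
    (hβhat_int : Integrable βhatOLS μ)
    (hηN_int : Integrable ηN μ)
    (hratio_int : ∀ i, Integrable (fun ω => s i ω / D ω) μ)
    (hratio_int' : ∀ i, Integrable (fun ω => s i ω * ε i ω / D ω) μ)
    (η : ℝ) (hη : η = ∫ ω, ηN ω ∂μ) (hη_ne : η ≠ -1) :
    (∫ ω, βhatOLS ω / (1 + η) ∂μ) = β := by
  have hN' : (N : ℝ) ≠ 0 := by positivity
  have h1η : (1 : ℝ) + η ≠ 0 := by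
    intro h; apply hη_ne; linarith
  -- E[s_i ε_i / D] = 0 by independence
  have hzero : ∀ i, ∫ ω, s i ω * ε i ω / D ω ∂μ = 0 := by
    intro i
    have hφ : Measurable (fun p : (Fin N → ℝ) × (Fin N → ℝ) =>
        p.1 i / ((1 / (N : ℝ)) * ∑ j, (p.1 j) ^ 2)) := by
      apply Measurable.div
      · exact (measurable_pi_apply i).comp measurable_fst
      · apply Measurable.const_mul
        exact Finset.measurable_sum _ fun j _ =>
          ((measurable_pi_apply j).comp measurable_fst).pow_const 2
    have hψ : Measurable (fun v : Fin N → ℝ => v i) := measurable_pi_apply i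
    have hind := hindep.comp hφ hψ
    have hind' : IndepFun (fun ω => s i ω / D ω) (ε i) μ := by
      have hx : (fun ω => s i ω / D ω) =
          (fun p : (Fin N → ℝ) × (Fin N → ℝ) =>
            p.1 i / ((1 / (N : ℝ)) * ∑ j, (p.1 j) ^ 2)) ∘
          (fun ω => ((fun i => s i ω, fun i => u i ω) :
            (Fin N → ℝ) × (Fin N → ℝ))) := by
        funext ω; simp [hD ω]
      rw [hx]; exact hind
    have heq : (fun ω => s i ω * ε i ω / D ω) =
        fun ω => (s i ω / D ω) * ε i ω := by
      funext ω; ring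
    calc ∫ ω, s i ω * ε i ω / D ω ∂μ
        = ∫ ω, (s i ω / D ω) * ε i ω ∂μ := by rw [heq]
      _ = (∫ ω, s i ω / D ω ∂μ) * ∫ ω, ε i ω ∂μ :=
          hind'.integral_mul_eq_mul_integral (hratio_int i).aestronglyMeasurable
            (hε_int i).aestronglyMeasurable
      _ = 0 := by rw [hε_mean i, mul_zero]
  -- a.e. decomposition of βhatOLS
  have hae : βhatOLS =ᵐ[μ]
      fun ω => β + β * ηN ω + ∑ i, s i ω * ε i ω / D ω / N := by
    filter_upwards [hDpos] with ω hDω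
    have hne : D ω ≠ 0 := ne_of_gt hDω
    have hsum : ∑ i, s i ω * y i ω =
        β * ∑ i, (s i ω) ^ 2 + β * ∑ i, s i ω * u i ω + ∑ i, s i ω * ε i ω := by
      rw [Finset.mul_sum, Finset.mul_sum, ← Finset.sum_add_distrib,
        ← Finset.sum_add_distrib]
      exact Finset.sum_congr rfl fun i _ => by rw [hy]; ring
    have hne' : (1 / (N : ℝ)) * ∑ i, (s i ω) ^ 2 ≠ 0 := (hD ω) ▸ hne
    simp only [div_div, ← Finset.sum_div]
    have hA : (∑ i, (s i ω) ^ 2) ≠ 0 := fun h => hne' (by rw [h, mul_zero])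
    rw [hβhatOLS ω, hηN ω, hsum, hD ω]
    field_simp
  -- integrability of pieces
  have hInt3 : Integrable (fun ω => ∑ i, s i ω * ε i ω / D ω / N) μ :=
    integrable_finset_sum _ fun i _ => (hratio_int' i).div_const _
  have hIntOLS : ∫ ω, βhatOLS ω ∂μ = β * (1 + η) := by
    rw [integral_congr_ae hae,
      integral_add (show Integrable (fun ω => β + β * ηN ω) μ from (integrable_const β).add (hηN_int.const_mul β)) hInt3,
      integral_add (integrable_const β) (hηN_int.const_mul β),
      integral_const, integral_const_mul,
      integral_finset_sum _ (fun i _ => (hratio_int' i).div_const _)]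
    simp only [integral_div, hzero, zero_div, Finset.sum_const_zero, add_zero,
      measure_univ, probReal_univ, ENNReal.toReal_one, smul_eq_mul, one_mul, ← hη]
    ring
  have : ∫ ω, βhatOLS ω / (1 + η) ∂μ = (∫ ω, βhatOLS ω ∂μ) / (1 + η) := by
    simp [div_eq_mul_inv, integral_mul_const]
  rw [this, hIntOLS, mul_div_assoc, div_self h1η, mul_one]
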